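/- Let V : [t_0, ∞) → R_{≥0} be differentiable with V(t_0) = V_0 > 0 and suppose V'(t) ≤ −(1/T_s)·ψ(V(t)) whenever V(t) > 0, where ψ(ℓ) = φ(|ℓ|)^{-1}·sign(ℓ) and φ : R_{≥0} → R∖{0} satisfies φ(0) = ∞, 0 < φ(ℓ) < ∞ for ℓ > 0, and ∫_0^∞ φ(ℓ) dℓ = 1. Then V(t) = 0 for all t ≥ t_0 + T_s. -/

import Mathlib

open MeasureTheory

/-- Predefined-time stability (Lemma 2 of the paper): if V̇ ≤ −(1/T_s)·ψ(V) with
ψ(ℓ) = φ(|ℓ|)⁻¹·sign(ℓ), where φ(0) = ∞, 0 < φ(ℓ) < ∞ for ℓ > 0 and ∫₀^∞ φ = 1,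
then V settles to zero within the predefined time T_s. -/
theorem predefined_time_settling (T_s t0 V0 : ℝ) (hT : 0 < T_s)
    (φ : ℝ → ENNReal) (hφ0 : φ 0 = ⊤)
    (hφ : ∀ ℓ : ℝ, 0 < ℓ → 0 < φ ℓ ∧ φ ℓ < ⊤)
    (hint : ∫⁻ ℓ in Set.Ioi (0 : ℝ), φ ℓ = 1)
    (V : ℝ → ℝ) (hVnn : ∀ t, 0 ≤ V t) (hV0 : V t0 = V0) (hV0pos : 0 < V0)
    (hdiff : Differentiable ℝ V)
    (hineq : ∀ t, t0 ≤ t → 0 < V t → deriv V t ≤ -(1 / T_s) * ((φ (V t))⁻¹).toReal) :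
    ∀ t, t0 + T_s ≤ t → V t = 0 := by
  have hTinv : 0 < 1 / T_s := by positivity
  -- derivative is strictly negative where V is positive (and t ≥ t0)
  have hderiv_neg : ∀ u, t0 ≤ u → 0 < V u → deriv V u < 0 := by
    intro u hu hVu
    have h1 := hineq u hu hVu
    have hc := hφ (V u) hVu
    have hpos : 0 < ((φ (V u))⁻¹).toReal := by
      apply ENNReal.toReal_pos
      · exact (ENNReal.inv_ne_zero).mpr hc.2.ne
      · exact (ENNReal.inv_ne_top).mpr hc.1.ne'
    nlinarith
  -- main quantitative lemma
  have key : ∀ τ, t0 < τ → (∀ u ∈ Set.Icc t0 τ, 0 < V u) → τ ≤ t0 + T_s := by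
    intro τ hτ hpos
    have hanti : StrictAntiOn V (Set.Icc t0 τ) := by
      apply strictAntiOn_of_deriv_neg (convex_Icc _ _) hdiff.continuous.continuousOn
      intro u hu
      rw [interior_Icc] at hu
      exact hderiv_neg u hu.1.le (hpos u ⟨hu.1.le, hu.2.le⟩)
    have hinj : Set.InjOn V (Set.Ioo t0 τ) := hanti.injOn.mono Set.Ioo_subset_Icc_self
    have hfd : ∀ u ∈ Set.Ioo t0 τ,
        HasFDerivWithinAt V ((1 : ℝ →L[ℝ] ℝ).smulRight (deriv V u)) (Set.Ioo t0 τ) u :=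
      fun u _ => ((hdiff u).hasDerivAt.hasDerivWithinAt).hasFDerivWithinAt
    have heq := lintegral_image_eq_lintegral_abs_det_fderiv_mul volume measurableSet_Ioo hfd hinj φ
    simp only [ContinuousLinearMap.smulRight_one_eq_toSpanSingleton, ContinuousLinearMap.det_toSpanSingleton] at heq
    have hsub : V '' Set.Ioo t0 τ ⊆ Set.Ioi 0 := by
      rintro _ ⟨u, hu, rfl⟩
      exact hpos u ⟨hu.1.le, hu.2.le⟩
    have hle1 : ∫⁻ ℓ in V '' Set.Ioo t0 τ, φ ℓ ≤ 1 := hint ▸ lintegral_mono_set hsub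
    have hlow : ∀ u ∈ Set.Ioo t0 τ,
        ENNReal.ofReal (1 / T_s) ≤ ENNReal.ofReal |deriv V u| * φ (V u) := by
      intro u hu
      have hVu : 0 < V u := hpos u ⟨hu.1.le, hu.2.le⟩
      have hc := hφ (V u) hVu
      have h1 := hineq u hu.1.le hVu
      have habs : (1 / T_s) * ((φ (V u))⁻¹).toReal ≤ |deriv V u| := by
        rw [abs_of_neg (hderiv_neg u hu.1.le hVu)]
        nlinarith
      calc ENNReal.ofReal (1 / T_s)
          = ENNReal.ofReal (1 / T_s) * ((φ (V u))⁻¹ * φ (V u)) := by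
            rw [ENNReal.inv_mul_cancel hc.1.ne' hc.2.ne, mul_one]
        _ = ENNReal.ofReal ((1 / T_s) * ((φ (V u))⁻¹).toReal) * φ (V u) := by
            rw [ENNReal.ofReal_mul hTinv.le, ENNReal.ofReal_toReal
              ((ENNReal.inv_ne_top).mpr hc.1.ne'), mul_assoc]
        _ ≤ ENNReal.ofReal |deriv V u| * φ (V u) :=
            mul_le_mul_left (ENNReal.ofReal_le_ofReal habs) _
    have hge : ENNReal.ofReal (1 / T_s) * volume (Set.Ioo t0 τ)
        ≤ ∫⁻ u in Set.Ioo t0 τ, ENNReal.ofReal |deriv V u| * φ (V u) := by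
      rw [← setLIntegral_const]
      exact setLIntegral_mono' measurableSet_Ioo hlow
    have hvol : volume (Set.Ioo t0 τ) = ENNReal.ofReal (τ - t0) := by
      simp [Real.volume_Ioo]
    have hchain : ENNReal.ofReal ((1 / T_s) * (τ - t0)) ≤ 1 := by
      calc ENNReal.ofReal ((1 / T_s) * (τ - t0))
          = ENNReal.ofReal (1 / T_s) * volume (Set.Ioo t0 τ) := by
            rw [hvol, ENNReal.ofReal_mul hTinv.le]
        _ ≤ ∫⁻ u in Set.Ioo t0 τ, ENNReal.ofReal |deriv V u| * φ (V u) := hge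
        _ = ∫⁻ ℓ in V '' Set.Ioo t0 τ, φ ℓ := heq.symm
        _ ≤ 1 := hle1
    rw [ENNReal.ofReal_le_one] at hchain
    have : τ - t0 ≤ T_s := by
      by_contra hcon
      push_neg at hcon
      have : 1 < (1 / T_s) * (τ - t0) := by
        rw [one_div, inv_mul_eq_div, lt_div_iff₀ hT]
        linarith
      linarith
    linarith
  -- now the conclusion
  intro t ht
  by_contra hne
  have hVt : 0 < V t := lt_of_le_of_ne (hVnn t) (Ne.symm hne)
  have ht0t : t0 < t := by linarith
  by_cases hz : ∃ u ∈ Set.Icc t0 t, V u = 0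
  · -- V hits zero, then it cannot come back up
    have hZne : {s ∈ Set.Icc t0 t | V s = 0}.Nonempty := hz
    set Z : Set ℝ := {s ∈ Set.Icc t0 t | V s = 0}
    have hZc : IsCompact Z := by
      apply (isCompact_Icc (a := t0) (b := t)).of_isClosed_subset
      · exact (isClosed_Icc.inter (isClosed_singleton.preimage hdiff.continuous))
      · exact fun s hs => hs.1
    have hu'mem : sSup Z ∈ Z := hZc.sSup_mem hZne
    set u' := sSup Z with hu'
    have hu'0 : V u' = 0 := hu'mem.2
    have hu't : u' < t := lt_of_le_of_ne hu'mem.1.2 (fun h => hne (h ▸ hu'0))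
    have hposIoc : ∀ s ∈ Set.Ioc u' t, 0 < V s := by
      intro s hs
      rcases (hVnn s).lt_or_eq with h | h
      · exact h
      · exfalso
        have : s ∈ Z := ⟨⟨le_trans hu'mem.1.1 hs.1.le, hs.2⟩, h.symm⟩
        exact absurd (le_csSup hZc.bddAbove this) (not_le.mpr hs.1)
    have hmono : ∀ s ∈ Set.Ioo u' t, V t ≤ V s := by
      intro s hs
      have hanti : StrictAntiOn V (Set.Icc s t) := by
        apply strictAntiOn_of_deriv_neg (convex_Icc _ _) hdiff.continuous.continuousOn
        intro u hu
        rw [interior_Icc] at hu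
        have : u ∈ Set.Ioc u' t := ⟨lt_trans hs.1 hu.1, hu.2.le⟩
        exact hderiv_neg u (le_trans hu'mem.1.1 this.1.le) (hposIoc u this)
      exact (hanti ⟨le_refl s, hs.2.le⟩ ⟨hs.2.le, le_refl t⟩ hs.2).le
    have htend : Filter.Tendsto V (nhdsWithin u' (Set.Ioi u')) (nhds (V u')) :=
      (hdiff.continuous.continuousAt.tendsto).mono_left nhdsWithin_le_nhds
    have hev : ∀ᶠ s in nhdsWithin u' (Set.Ioi u'), V t ≤ V s := by
      filter_upwards [Ioo_mem_nhdsGT_of_mem (Set.mem_Ico.mpr ⟨le_refl u', hu't⟩)] with s hs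
      exact hmono s hs
    have : V t ≤ V u' := ge_of_tendsto htend hev
    rw [hu'0] at this
    linarith
  · -- V positive on [t0, t]; extend slightly past t and contradict the key bound
    push_neg at hz
    have hpos : ∀ u ∈ Set.Icc t0 t, 0 < V u :=
      fun u hu => lt_of_le_of_ne (hVnn u) (Ne.symm (hz u hu))
    have hopen : IsOpen {s | 0 < V s} := isOpen_lt continuous_const hdiff.continuous
    obtain ⟨δ, hδ, hball⟩ := Metric.isOpen_iff.mp hopen t hVt
    have hkey := key (t + δ / 2) (by linarith) ?_
    · linarith
    intro u hu
    rcases le_or_gt u t with h | h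
    · exact hpos u ⟨hu.1, h⟩
    · apply hball
      rw [Metric.mem_ball, Real.dist_eq, abs_of_pos (by linarith)]
      linarith [hu.2]
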